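/- Let Q, Q' be quadratic polynomials over C, U a linear space of linear forms, and r a natural number. Then there exists a linear space of linear forms V with dim(V) ≤ 8r such that: for every P in C[U]_2 and all scalars α, β with rank_s(αQ + βQ' + P) ≤ r, we have MS(αQ + βQ' + P) ⊆ V + U. -/

import Mathlib

open MvPolynomial

noncomputable section

/-- A linear form: a homogeneous polynomial of degree 1. -/
def IsLinForm {σ : Type*} (p : MvPolynomial σ ℂ) : Prop := p.IsHomogeneous 1

/-- `Q` admits a representation as a sum of `r` products of pairs of linear forms. -/
def HasRep {σ : Type*} (Q : MvPolynomial σ ℂ) (r : ℕ) : Prop :=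
  ∃ a b : Fin r → MvPolynomial σ ℂ,
    (∀ i, IsLinForm (a i)) ∧ (∀ i, IsLinForm (b i)) ∧ Q = ∑ i, a i * b i

/-- `rank_s Q`: the minimal `r` such that `Q = ∑_{i=1}^r a_{2i-1} a_{2i}` for linear forms. -/
noncomputable def rankS {σ : Type*} (Q : MvPolynomial σ ℂ) : ℕ := sInf {r | HasRep Q r}

/-- The minimal space `MS Q`: the span of the linear forms appearing in a minimal
representation of `Q` (taken as the supremum over all minimal representations,
which coincides with any single one by well-definedness). -/
noncomputable def MS {σ : Type*} (Q : MvPolynomial σ ℂ) : Submodule ℂ (MvPolynomial σ ℂ) :=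
  ⨆ p : {ab : (Fin (rankS Q) → MvPolynomial σ ℂ) × (Fin (rankS Q) → MvPolynomial σ ℂ) //
      (∀ i, IsLinForm (ab.1 i)) ∧ (∀ i, IsLinForm (ab.2 i)) ∧ Q = ∑ i, ab.1 i * ab.2 i},
    Submodule.span ℂ (Set.range p.1.1 ∪ Set.range p.1.2)

/-- `C[V]₂`: the space of homogeneous quadratics depending only on linear forms in `V`. -/
def quadOn {σ : Type*} (V : Submodule ℂ (MvPolynomial σ ℂ)) :
    Submodule ℂ (MvPolynomial σ ℂ) :=
  Submodule.span ℂ {q | ∃ v ∈ V, ∃ w ∈ V, q = v * w}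

namespace Stmt5Aux

open Finset

variable {n : ℕ}

lemma finsupp_degree_one {σ : Type*} [DecidableEq σ] {d : σ →₀ ℕ} (h : d.degree = 1) :
    ∃ k, d = Finsupp.single k 1 := by
  have hc : Multiset.card (Finsupp.toMultiset d) = 1 := by
    rw [Finsupp.card_toMultiset]; exact h
  obtain ⟨a, ha⟩ := Multiset.card_eq_one.mp hc
  refine ⟨a, ?_⟩
  rw [Finsupp.toMultiset_eq_iff.mp ha, Multiset.toFinsupp_singleton]

lemma finsupp_degree_two {σ : Type*} [DecidableEq σ] {d : σ →₀ ℕ} (h : d.degree = 2) :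
    ∃ k l, d = Finsupp.single k 1 + Finsupp.single l 1 := by
  have hc : Multiset.card (Finsupp.toMultiset d) = 2 := by
    rw [Finsupp.card_toMultiset]; exact h
  obtain ⟨a, b, hab⟩ := Multiset.card_eq_two.mp hc
  refine ⟨a, b, ?_⟩
  rw [Finsupp.toMultiset_eq_iff.mp hab]
  have : ({a, b} : Multiset σ) = {a} + {b} := rfl
  rw [this, map_add, Multiset.toFinsupp_singleton, Multiset.toFinsupp_singleton]

lemma linform_eq_sum {p : MvPolynomial (Fin n) ℂ} (hp : IsLinForm p) :
    p = ∑ k : Fin n, C (coeff (Finsupp.single k 1) p) * X k := by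
  apply MvPolynomial.ext; intro d
  rw [MvPolynomial.coeff_sum]
  simp_rw [coeff_C_mul, coeff_X']
  by_cases hd : ∃ k, d = Finsupp.single k 1
  · obtain ⟨k, rfl⟩ := hd
    rw [Finset.sum_eq_single k]
    · simp
    · intro l _ hl
      rw [if_neg, mul_zero]
      simp only [Finsupp.single_eq_single_iff]
      push_neg
      exact ⟨fun h1 => absurd h1 hl, fun h1 => absurd h1 one_ne_zero⟩
    · simp
  · have hdeg : d.degree ≠ 1 := fun h => hd (finsupp_degree_one h)
    rw [hp.coeff_eq_zero hdeg]
    apply (Finset.sum_eq_zero _).symm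
    intro k _
    rw [if_neg (fun h => hd ⟨k, h.symm⟩), mul_zero]

lemma linform_ext {p q : MvPolynomial (Fin n) ℂ} (hp : IsLinForm p) (hq : IsLinForm q)
    (h : ∀ k, coeff (Finsupp.single k 1) p = coeff (Finsupp.single k 1) q) : p = q := by
  rw [linform_eq_sum hp, linform_eq_sum hq]
  exact Finset.sum_congr rfl fun k _ => by rw [h k]

lemma pderiv_linform (k : Fin n) {p : MvPolynomial (Fin n) ℂ} (hp : IsLinForm p) :
    pderiv k p = C (coeff (Finsupp.single k 1) p) := by
  conv_lhs => rw [linform_eq_sum hp]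
  rw [map_sum]
  rw [Finset.sum_eq_single k]
  · simp
  · intro l _ hl
    rw [pderiv_C_mul, pderiv_X_of_ne hl, mul_zero]
  · simp

lemma eval_linform {p : MvPolynomial (Fin n) ℂ} (hp : IsLinForm p) (y : Fin n → ℂ) :
    eval y p = ∑ k, coeff (Finsupp.single k 1) p * y k := by
  conv_lhs => rw [linform_eq_sum hp]
  rw [map_sum]
  simp


lemma islinform_sum {ι : Type*} (s : Finset ι) (f : ι → MvPolynomial (Fin n) ℂ)
    (h : ∀ i ∈ s, IsLinForm (f i)) : IsLinForm (∑ i ∈ s, f i) :=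
  IsHomogeneous.sum s f 1 h

lemma pderiv_rep {m : ℕ} (a b : Fin m → MvPolynomial (Fin n) ℂ)
    (ha : ∀ i, IsLinForm (a i)) (hb : ∀ i, IsLinForm (b i)) (k : Fin n) :
    pderiv k (∑ i, a i * b i) =
      ∑ i, (C (coeff (Finsupp.single k 1) (a i)) * b i
        + C (coeff (Finsupp.single k 1) (b i)) * a i) := by
  rw [map_sum]
  refine Finset.sum_congr rfl fun i _ => ?_
  rw [pderiv_mul, pderiv_linform k (ha i), pderiv_linform k (hb i)]
  ring

lemma pderiv_rep_lin {m : ℕ} (a b : Fin m → MvPolynomial (Fin n) ℂ)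
    (ha : ∀ i, IsLinForm (a i)) (hb : ∀ i, IsLinForm (b i)) (k : Fin n) :
    IsLinForm (pderiv k (∑ i, a i * b i)) := by
  rw [pderiv_rep a b ha hb]
  exact islinform_sum _ _ fun i _ => ((hb i).C_mul _).add ((ha i).C_mul _)

lemma dir_deriv_rep {m : ℕ} (a b : Fin m → MvPolynomial (Fin n) ℂ)
    (ha : ∀ i, IsLinForm (a i)) (hb : ∀ i, IsLinForm (b i)) (y : Fin n → ℂ) :
    ∑ k, y k • pderiv k (∑ i, a i * b i) =
      ∑ i, (C (eval y (a i)) * b i + C (eval y (b i)) * a i) := by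
  simp_rw [pderiv_rep a b ha hb, Finset.smul_sum]
  rw [Finset.sum_comm]
  refine Finset.sum_congr rfl fun i _ => ?_
  have key : ∀ q p : MvPolynomial (Fin n) ℂ, IsLinForm p →
      ∑ k, y k • (C (coeff (Finsupp.single k 1) p) * q) = C (eval y p) * q := by
    intro q p hp
    rw [eval_linform hp y, map_sum, Finset.sum_mul]
    refine Finset.sum_congr rfl fun k _ => ?_
    rw [smul_eq_C_mul, C_mul]
    ring
  rw [← key (b i) (a i) (ha i), ← key (a i) (b i) (hb i), ← Finset.sum_add_distrib]
  refine Finset.sum_congr rfl fun k _ => ?_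
  rw [smul_add]

lemma tau_symm {m : ℕ} (a b : Fin m → MvPolynomial (Fin n) ℂ)
    (ha : ∀ i, IsLinForm (a i)) (hb : ∀ i, IsLinForm (b i)) (k l : Fin n) :
    coeff (Finsupp.single l 1) (pderiv k (∑ i, a i * b i)) =
      coeff (Finsupp.single k 1) (pderiv l (∑ i, a i * b i)) := by
  rw [pderiv_rep a b ha hb, pderiv_rep a b ha hb, MvPolynomial.coeff_sum,
    MvPolynomial.coeff_sum]
  refine Finset.sum_congr rfl fun i _ => ?_
  simp only [coeff_add, coeff_C_mul]
  ring

lemma mem_span_pderiv_of_minimal {F : MvPolynomial (Fin n) ℂ} {m : ℕ}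
    (a b : Fin m → MvPolynomial (Fin n) ℂ)
    (ha : ∀ i, IsLinForm (a i)) (hb : ∀ i, IsLinForm (b i)) (hF : F = ∑ i, a i * b i)
    (hmin : ∀ k, HasRep F k → m ≤ k) (j : Fin m) :
    a j ∈ Submodule.span ℂ (Set.range fun k : Fin n => pderiv k F) := by
  classical
  by_contra hnot
  set W := Submodule.span ℂ (Set.range fun k : Fin n => pderiv k F) with hWdef
  have hWlin : ∀ w ∈ W, IsLinForm w := by
    intro w hw
    have : W ≤ homogeneousSubmodule (Fin n) ℂ 1 := by
      rw [hWdef, Submodule.span_le]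
      rintro _ ⟨k, rfl⟩
      rw [SetLike.mem_coe, mem_homogeneousSubmodule, hF]
      exact pderiv_rep_lin a b ha hb k
    exact this hw
  -- the coefficient linear map
  let τ : MvPolynomial (Fin n) ℂ →ₗ[ℂ] (Fin n → ℂ) :=
    { toFun := fun p k => coeff (Finsupp.single k 1) p
      map_add' := fun p q => by funext k; simp [coeff_add]
      map_smul' := fun c p => by funext k; simp [coeff_smul] }
  have hτnot : τ (a j) ∉ Submodule.map τ W := by
    rintro ⟨w, hwW, hw⟩
    exact hnot (by
      rwa [linform_ext (ha j) (hWlin w hwW) (fun k => congrFun hw.symm k)])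
  obtain ⟨f, hfne, hfbot⟩ :=
    (Submodule.map τ W).exists_dual_map_eq_bot_of_notMem hτnot inferInstance
  set y : Fin n → ℂ := fun k => f (Pi.single k 1) with hy
  have hfy : ∀ u : Fin n → ℂ, f u = ∑ k, u k * y k := by
    intro u
    conv_lhs => rw [pi_eq_sum_univ u, map_sum]
    refine Finset.sum_congr rfl fun k _ => ?_
    rw [map_smul, smul_eq_mul]
    have hps : (fun j => if k = j then (1:ℂ) else 0) = Pi.single k 1 := by
      funext j; simp [Pi.single_apply, eq_comm]
    rw [hps]
  have hfW : ∀ w ∈ W, f (τ w) = 0 := by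
    intro w hw
    have h1 : τ w ∈ Submodule.map τ W := Submodule.mem_map_of_mem hw
    have h2 : f (τ w) ∈ Submodule.map f (Submodule.map τ W) :=
      Submodule.mem_map_of_mem h1
    rwa [hfbot, Submodule.mem_bot] at h2
  -- the directional derivative of F along y vanishes
  have hL : ∑ i, (C (eval y (a i)) * b i + C (eval y (b i)) * a i) = 0 := by
    rw [← dir_deriv_rep a b ha hb y, ← hF]
    have hLlin : IsLinForm (∑ k, y k • pderiv k F) := by
      refine islinform_sum _ _ fun k _ => ?_
      rw [smul_eq_C_mul]
      exact IsHomogeneous.C_mul (by rw [hF]; exact pderiv_rep_lin a b ha hb k) _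
    refine linform_ext hLlin (isHomogeneous_zero _ _ _) fun k => ?_
    rw [coeff_zero, MvPolynomial.coeff_sum]
    have : ∀ l : Fin n, coeff (Finsupp.single k 1) (y l • pderiv l F)
        = coeff (Finsupp.single l 1) (pderiv k F) * y l := by
      intro l
      rw [coeff_smul, smul_eq_mul, hF, tau_symm a b ha hb, ← hF, mul_comm]
    rw [Finset.sum_congr rfl fun l _ => this l]
    refine Eq.trans ?_ (hfW (pderiv k F) (Submodule.subset_span ⟨k, rfl⟩))
    exact (hfy (τ (pderiv k F))).symm
  -- scalar identity
  have hscal : ∑ i, eval y (a i) * eval y (b i) = 0 := by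
    have := congrArg (eval y) hL
    rw [map_sum, map_zero] at this
    simp only [map_add, map_mul, eval_C] at this
    have h2 : (2:ℂ) * ∑ i, eval y (a i) * eval y (b i) = 0 := by
      rw [Finset.mul_sum, ← this]
      exact Finset.sum_congr rfl fun i _ => by ring
    have := mul_eq_zero.mp h2
    simpa using this
  -- the nonvanishing coefficient
  have hαj : eval y (a j) ≠ 0 := by
    rw [eval_linform (ha j) y]
    intro h0
    exact hfne (by rw [hfy (τ (a j))]; exact h0)
  -- the substitution
  set g : MvPolynomial (Fin n) ℂ := C (eval y (a j))⁻¹ * a j with hg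
  set a' : Fin m → MvPolynomial (Fin n) ℂ := fun i => a i - C (eval y (a i)) * g with ha'
  set b' : Fin m → MvPolynomial (Fin n) ℂ := fun i => b i - C (eval y (b i)) * g with hb'
  have hglin : IsLinForm g := (ha j).C_mul _
  have ha'lin : ∀ i, IsLinForm (a' i) := fun i => (ha i).sub (hglin.C_mul _)
  have hb'lin : ∀ i, IsLinForm (b' i) := fun i => (hb i).sub (hglin.C_mul _)
  have ha'j : a' j = 0 := by
    rw [ha', hg]
    simp only
    rw [← mul_assoc, ← C_mul, mul_inv_cancel₀ hαj, C_1, one_mul, sub_self]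
  have hrep : F = ∑ i, a' i * b' i := by
    have expand : ∀ i : Fin m, a' i * b' i =
        a i * b i - (C (eval y (a i)) * b i + C (eval y (b i)) * a i) * g
          + (C (eval y (a i)) * C (eval y (b i))) * (g * g) := by
      intro i; rw [ha', hb']; ring
    rw [Finset.sum_congr rfl fun i _ => expand i]
    rw [Finset.sum_add_distrib, Finset.sum_sub_distrib, ← Finset.sum_mul, hL, zero_mul,
      sub_zero, ← Finset.sum_mul]
    have : ∑ i, C (eval y (a i)) * C (eval y (b i)) = (0 : MvPolynomial (Fin n) ℂ) := by
      rw [← map_zero (C : ℂ →+* MvPolynomial (Fin n) ℂ), ← hscal, map_sum]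
      exact Finset.sum_congr rfl fun i _ => C_mul.symm
    rw [this, zero_mul, add_zero, hF]
  -- drop the j-th term
  obtain ⟨m', rfl⟩ : ∃ m', m = m' + 1 := ⟨m - 1, (Nat.succ_pred_eq_of_pos j.pos).symm⟩
  have hnew : HasRep F m' := by
    refine ⟨fun i => a' (j.succAbove i), fun i => b' (j.succAbove i),
      fun i => ha'lin _, fun i => hb'lin _, ?_⟩
    rw [hrep, Fin.sum_univ_succAbove (fun i => a' i * b' i) j, ha'j, zero_mul, zero_add]
  have := hmin m' hnew
  omega

lemma MS_le_pd (F : MvPolynomial (Fin n) ℂ) :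
    MS F ≤ Submodule.span ℂ (Set.range fun k : Fin n => pderiv k F) := by
  apply iSup_le
  rintro ⟨⟨a, b⟩, ha, hb, hF⟩
  rw [Submodule.span_le]
  have hmin : ∀ k, HasRep F k → rankS F ≤ k := fun k hk => Nat.sInf_le hk
  rintro p hp
  simp only [Set.mem_union, Set.mem_range] at hp
  rcases hp with ⟨i, rfl⟩ | ⟨i, rfl⟩
  · exact mem_span_pderiv_of_minimal a b ha hb hF hmin i
  · have hF' : F = ∑ i, b i * a i :=
      hF.trans (Finset.sum_congr rfl fun i _ => mul_comm _ _)
    exact mem_span_pderiv_of_minimal b a hb ha hF' hmin i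

lemma islinform_zero : IsLinForm (0 : MvPolynomial (Fin n) ℂ) := isHomogeneous_zero _ _ _

lemma hasRep_succ {F : MvPolynomial (Fin n) ℂ} {m : ℕ} (h : HasRep F m) : HasRep F (m + 1) := by
  obtain ⟨a, b, ha, hb, hF⟩ := h
  refine ⟨Fin.snoc a 0, Fin.snoc b 0, ?_, ?_, ?_⟩
  · intro i
    refine Fin.lastCases ?_ (fun i => ?_) i
    · rw [Fin.snoc_last]; exact islinform_zero
    · rw [Fin.snoc_castSucc]; exact ha i
  · intro i
    refine Fin.lastCases ?_ (fun i => ?_) i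
    · rw [Fin.snoc_last]; exact islinform_zero
    · rw [Fin.snoc_castSucc]; exact hb i
  · rw [Fin.sum_univ_castSucc]
    simp only [Fin.snoc_castSucc, Fin.snoc_last, mul_zero, add_zero]
    exact hF

lemma hasRep_mono {F : MvPolynomial (Fin n) ℂ} {m m' : ℕ} (h : HasRep F m) (hm : m ≤ m') :
    HasRep F m' :=
  Nat.le_induction h (fun _ _ ih => hasRep_succ ih) m' hm

lemma hasRep_exists {F : MvPolynomial (Fin n) ℂ} (hF : F.IsHomogeneous 2) :
    ∃ m, HasRep F m := by
  classical
  have hcl : ∀ d ∈ F.support, ∃ kl : Fin n × Fin n,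
      d = Finsupp.single kl.1 1 + Finsupp.single kl.2 1 := by
    intro d hd
    have hdeg : d.degree = 2 := by
      rw [Finsupp.degree_eq_weight_one]
      exact hF (mem_support_iff.mp hd)
    obtain ⟨k, l, h⟩ := finsupp_degree_two hdeg
    exact ⟨(k, l), h⟩
  choose kl hkl using hcl
  set e := F.support.equivFin with he
  refine ⟨F.support.card,
    fun i => C (coeff (e.symm i).1 F) * X (kl (e.symm i).1 (e.symm i).2).1,
    fun i => X (kl (e.symm i).1 (e.symm i).2).2,
    fun i => (isHomogeneous_X _ _).C_mul _, fun i => isHomogeneous_X _ _, ?_⟩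
  have key : F = ∑ x : {d // d ∈ F.support},
      C (coeff x.1 F) * X (kl x.1 x.2).1 * X (kl x.1 x.2).2 := by
    conv_lhs => rw [← support_sum_monomial_coeff F]
    rw [← Finset.sum_coe_sort F.support (fun d => monomial d (coeff d F))]
    refine Finset.sum_congr rfl fun x _ => ?_
    have hX : (X (kl x.1 x.2).1 : MvPolynomial (Fin n) ℂ) * X (kl x.1 x.2).2 =
        monomial (Finsupp.single (kl x.1 x.2).1 1 + Finsupp.single (kl x.1 x.2).2 1) 1 := by
      rw [X, X, monomial_mul, one_mul]
    rw [mul_assoc, hX, C_mul_monomial, mul_one, ← hkl x.1 x.2]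
  exact key.trans (Equiv.sum_comp e.symm
    (fun x : {d // d ∈ F.support} =>
      C (coeff x.1 F) * X (kl x.1 x.2).1 * X (kl x.1 x.2).2)).symm

lemma rep_of_le {F : MvPolynomial (Fin n) ℂ} (hF : F.IsHomogeneous 2) {r : ℕ}
    (h : rankS F ≤ r) :
    ∃ a b : Fin r → MvPolynomial (Fin n) ℂ,
      (∀ i, IsLinForm (a i)) ∧ (∀ i, IsLinForm (b i)) ∧ F = ∑ i, a i * b i := by
  have hne : {m | HasRep F m}.Nonempty := hasRep_exists hF
  exact hasRep_mono (Nat.sInf_mem hne) h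

lemma pd_rep_le {F : MvPolynomial (Fin n) ℂ} {m : ℕ}
    (a b : Fin m → MvPolynomial (Fin n) ℂ)
    (ha : ∀ i, IsLinForm (a i)) (hb : ∀ i, IsLinForm (b i)) (hF : F = ∑ i, a i * b i) :
    Submodule.span ℂ (Set.range fun k : Fin n => pderiv k F) ≤
      Submodule.span ℂ (Set.range a ∪ Set.range b) := by
  rw [Submodule.span_le]
  rintro _ ⟨k, rfl⟩
  show pderiv k F ∈ _
  rw [hF, pderiv_rep a b ha hb]
  refine Submodule.sum_mem _ fun i _ => Submodule.add_mem _ ?_ ?_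
  · rw [← smul_eq_C_mul]
    exact Submodule.smul_mem _ _ (Submodule.subset_span (Or.inr ⟨i, rfl⟩))
  · rw [← smul_eq_C_mul]
    exact Submodule.smul_mem _ _ (Submodule.subset_span (Or.inl ⟨i, rfl⟩))

lemma span_linforms {s : Set (MvPolynomial (Fin n) ℂ)} (hs : ∀ p ∈ s, IsLinForm p) :
    ∀ v ∈ Submodule.span ℂ s, IsLinForm v := by
  intro v hv
  have hle : Submodule.span ℂ s ≤ homogeneousSubmodule (Fin n) ℂ 1 :=
    Submodule.span_le.mpr fun p hp => hs p hp
  exact hle hv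

lemma quadOn_homog {U : Submodule ℂ (MvPolynomial (Fin n) ℂ)} (hU : ∀ v ∈ U, IsLinForm v)
    {P : MvPolynomial (Fin n) ℂ} (hP : P ∈ quadOn U) : P.IsHomogeneous 2 := by
  refine Submodule.span_induction ?_ ?_ ?_ ?_ hP
  · rintro q ⟨v, hv, w, hw, rfl⟩
    exact (hU v hv).mul (hU w hw)
  · exact isHomogeneous_zero _ _ _
  · exact fun x y _ _ hx hy => hx.add hy
  · intro c x _ hx
    rw [smul_eq_C_mul]
    exact hx.C_mul c

lemma pderiv_quadOn {U : Submodule ℂ (MvPolynomial (Fin n) ℂ)} (hU : ∀ v ∈ U, IsLinForm v)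
    {P : MvPolynomial (Fin n) ℂ} (hP : P ∈ quadOn U) (k : Fin n) : pderiv k P ∈ U := by
  refine Submodule.span_induction ?_ ?_ ?_ ?_ hP
  · rintro q ⟨v, hv, w, hw, rfl⟩
    rw [pderiv_mul, pderiv_linform k (hU v hv), pderiv_linform k (hU w hw),
      ← smul_eq_C_mul, mul_comm, ← smul_eq_C_mul]
    exact Submodule.add_mem _ (Submodule.smul_mem _ _ hw) (Submodule.smul_mem _ _ hv)
  · rw [map_zero]; exact Submodule.zero_mem _
  · intro x y _ _ hx hy
    rw [map_add]; exact Submodule.add_mem _ hx hy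
  · intro c x _ hx
    rw [smul_eq_C_mul, pderiv_C_mul, ← smul_eq_C_mul]
    exact Submodule.smul_mem _ _ hx

lemma smul_homog {c : ℂ} {p : MvPolynomial (Fin n) ℂ} {d : ℕ} (hp : p.IsHomogeneous d) :
    (c • p).IsHomogeneous d := by
  rw [smul_eq_C_mul]; exact hp.C_mul c


lemma pderiv_smul (c : ℂ) (p : MvPolynomial (Fin n) ℂ) (k : Fin n) :
    pderiv k (c • p) = c • pderiv k p := by
  rw [smul_eq_C_mul, pderiv_C_mul, smul_eq_C_mul]

lemma MS_le_of_pderiv {F : MvPolynomial (Fin n) ℂ} {T : Submodule ℂ (MvPolynomial (Fin n) ℂ)}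
    (hT : ∀ k : Fin n, pderiv k F ∈ T) : MS F ≤ T :=
  (MS_le_pd F).trans (Submodule.span_le.mpr (by rintro _ ⟨k, rfl⟩; exact hT k))

end Stmt5Aux

open Stmt5Aux

/-- for quadratics `Q, Q'`, a space `U` of linear forms and `r : ℕ`, there is a
space `V` of linear forms, `dim V ≤ 8r`, such that every low-rank combination
`αQ + βQ' + P` with `P ∈ C[U]₂` has its minimal space inside `V + U`. -/
theorem stmt_5 {n : ℕ} (Q Q' : MvPolynomial (Fin n) ℂ)
    (hQ : Q.IsHomogeneous 2) (hQ' : Q'.IsHomogeneous 2)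
    (U : Submodule ℂ (MvPolynomial (Fin n) ℂ)) (hU : ∀ v ∈ U, IsLinForm v) (r : ℕ) :
    ∃ V : Submodule ℂ (MvPolynomial (Fin n) ℂ),
      (∀ v ∈ V, IsLinForm v) ∧ Module.finrank ℂ V ≤ 8 * r ∧
      ∀ P ∈ quadOn U, ∀ α β : ℂ,
        rankS (α • Q + β • Q' + P) ≤ r → MS (α • Q + β • Q' + P) ≤ V ⊔ U := by

  classical
  have hhom : ∀ (α β : ℂ) (P : MvPolynomial (Fin n) ℂ), P ∈ quadOn U →
      (α • Q + β • Q' + P).IsHomogeneous 2 := fun α β P hP =>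
    ((smul_homog hQ).add (smul_homog hQ')).add (quadOn_homog hU hP)
  by_cases hA : ∃ (α1 β1 : ℂ) (P1 : MvPolynomial (Fin n) ℂ) (α2 β2 : ℂ) (P2 : MvPolynomial (Fin n) ℂ), P1 ∈ quadOn U ∧ P2 ∈ quadOn U ∧
      rankS (α1 • Q + β1 • Q' + P1) ≤ r ∧ rankS (α2 • Q + β2 • Q' + P2) ≤ r ∧
      α1 * β2 - α2 * β1 ≠ 0
  · obtain ⟨α1, β1, P1, α2, β2, P2, hP1, hP2, hr1, hr2, hdet⟩ := hA
    obtain ⟨a1, b1, ha1, hb1, hF1⟩ := rep_of_le (hhom α1 β1 P1 hP1) hr1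
    obtain ⟨a2, b2, ha2, hb2, hF2⟩ := rep_of_le (hhom α2 β2 P2 hP2) hr2
    refine ⟨Submodule.span ℂ
        ((Set.range a1 ∪ Set.range b1) ∪ (Set.range a2 ∪ Set.range b2)), ?_, ?_, ?_⟩
    · refine span_linforms ?_
      rintro p ((⟨i, rfl⟩ | ⟨i, rfl⟩) | (⟨i, rfl⟩ | ⟨i, rfl⟩))
      exacts [ha1 i, hb1 i, ha2 i, hb2 i]
    · have hseq : (Set.range a1 ∪ Set.range b1) ∪ (Set.range a2 ∪ Set.range b2)
          = Set.range (Sum.elim (Sum.elim a1 b1) (Sum.elim a2 b2)) := by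
        rw [Set.Sum.elim_range, Set.Sum.elim_range, Set.Sum.elim_range]
      rw [hseq]
      refine le_trans (finrank_range_le_card _) ?_
      simp only [Fintype.card_sum, Fintype.card_fin]
      omega
    · intro P hP α β _
      set det : ℂ := α1 * β2 - α2 * β1 with hdetdef
      set c : ℂ := (α * β2 - β * α2) / det with hc
      set d : ℂ := (β * α1 - α * β1) / det with hd
      have hP'' : P - c • P1 - d • P2 ∈ quadOn U :=
        Submodule.sub_mem _ (Submodule.sub_mem _ hP (Submodule.smul_mem _ _ hP1))
          (Submodule.smul_mem _ _ hP2)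
      have hcomb : α • Q + β • Q' + P =
          c • (α1 • Q + β1 • Q' + P1) + d • (α2 • Q + β2 • Q' + P2)
            + (P - c • P1 - d • P2) := by
        match_scalars
        · rw [hc, hd, hdetdef]; have h0 : α1 * β2 - α2 * β1 ≠ 0 := hdet; linear_combination (-α) * mul_inv_cancel₀ h0
        · rw [hc, hd, hdetdef]; have h0 : α1 * β2 - α2 * β1 ≠ 0 := hdet; linear_combination (-β) * mul_inv_cancel₀ h0
        · ring
        · ring
        · ring
      refine MS_le_of_pderiv fun k => ?_
      rw [hcomb, map_add, map_add, pderiv_smul, pderiv_smul]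
      refine Submodule.add_mem _ (Submodule.add_mem _ ?_ ?_)
        (Submodule.mem_sup_right (pderiv_quadOn hU hP'' k))
      · refine Submodule.mem_sup_left (Submodule.smul_mem _ _ ?_)
        refine Submodule.span_mono Set.subset_union_left ?_
        exact pd_rep_le a1 b1 ha1 hb1 hF1 (Submodule.subset_span ⟨k, rfl⟩)
      · refine Submodule.mem_sup_left (Submodule.smul_mem _ _ ?_)
        refine Submodule.span_mono Set.subset_union_right ?_
        exact pd_rep_le a2 b2 ha2 hb2 hF2 (Submodule.subset_span ⟨k, rfl⟩)
  · push_neg at hA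
    by_cases hB : ∃ (α0 β0 : ℂ) (P0 : MvPolynomial (Fin n) ℂ), P0 ∈ quadOn U ∧ rankS (α0 • Q + β0 • Q' + P0) ≤ r ∧
        (α0 ≠ 0 ∨ β0 ≠ 0)
    · obtain ⟨α0, β0, P0, hP0, hr0, hne0⟩ := hB
      obtain ⟨a0, b0, ha0, hb0, hF0⟩ := rep_of_le (hhom α0 β0 P0 hP0) hr0
      refine ⟨Submodule.span ℂ (Set.range a0 ∪ Set.range b0), ?_, ?_, ?_⟩
      · refine span_linforms ?_
        rintro p (⟨i, rfl⟩ | ⟨i, rfl⟩)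
        exacts [ha0 i, hb0 i]
      · have hseq : Set.range a0 ∪ Set.range b0 = Set.range (Sum.elim a0 b0) :=
          (Set.Sum.elim_range a0 b0).symm
        rw [hseq]
        refine le_trans (finrank_range_le_card _) ?_
        simp only [Fintype.card_sum, Fintype.card_fin]
        omega
      · intro P hP α β hrank
        have hdet0 : α0 * β - α * β0 = 0 := hA α0 β0 P0 α β P hP0 hP hr0 hrank
        obtain ⟨t, hα, hβ⟩ : ∃ t : ℂ, α = t * α0 ∧ β = t * β0 := by
          rcases hne0 with h0 | h0
          · refine ⟨α / α0, by field_simp, ?_⟩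
            field_simp
            linear_combination hdet0
          · refine ⟨β / β0, ?_, by field_simp⟩
            field_simp
            linear_combination -hdet0
        have hP' : P - t • P0 ∈ quadOn U :=
          Submodule.sub_mem _ hP (Submodule.smul_mem _ _ hP0)
        have hcomb : α • Q + β • Q' + P =
            t • (α0 • Q + β0 • Q' + P0) + (P - t • P0) := by
          rw [hα, hβ]
          match_scalars <;> ring
        refine MS_le_of_pderiv fun k => ?_
        rw [hcomb, map_add, pderiv_smul]
        refine Submodule.add_mem _ ?_
          (Submodule.mem_sup_right (pderiv_quadOn hU hP' k))
        refine Submodule.mem_sup_left (Submodule.smul_mem _ _ ?_)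
        exact pd_rep_le a0 b0 ha0 hb0 hF0 (Submodule.subset_span ⟨k, rfl⟩)
    · push_neg at hB
      refine ⟨⊥, ?_, ?_, ?_⟩
      · intro v hv
        rw [Submodule.mem_bot] at hv
        rw [hv]; exact islinform_zero
      · simp
      · intro P hP α β hrank
        obtain ⟨hα0, hβ0⟩ := hB α β P hP hrank
        refine MS_le_of_pderiv fun k => ?_
        rw [hα0, hβ0, zero_smul, zero_smul, zero_add, zero_add]
        exact Submodule.mem_sup_right (pderiv_quadOn hU hP k)
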